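/- Let G be a finite directed graph in which every directed cycle passes through at least one vertex of a fixed set V_τ, and construct the directed graph G_NC as follows: for every vertex v of G create vertices v and v' with an edge (v, v'); for every edge (u, w) of G with w ∉ V_τ create an edge (u', w); for every w ∈ V_τ create vertices D_w, D_{w'} with edge (D_w, D_{w'}), and for every edge (u, w) of G with w ∈ V_τ create an edge (u', D_w). Then G_NC is acyclic. -/

import Mathlib

def IsDiCycle {V : Type*} (A : V → V → Prop) (c : List V) : Prop :=
  c ≠ [] ∧ c.Nodup ∧ c.Chain' A ∧ ∀ x ∈ c.getLast?, ∀ y ∈ c.head?, A x y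


lemma IsDiCycle.succ_mem {V : Type*} {A : V → V → Prop} {l : List V}
    (h : IsDiCycle A l) {x : V} (hx : x ∈ l) : ∃ y ∈ l, A x y := by
  obtain ⟨ne, _, hch, hwrap⟩ := h
  obtain ⟨i, hi, rfl⟩ := List.getElem_of_mem hx
  by_cases h1 : i + 1 < l.length
  · exact ⟨l[i+1]'h1, List.getElem_mem h1, List.isChain_iff_getElem.mp hch i (by omega)⟩
  · refine ⟨l.head ne, List.head_mem ne, ?_⟩
    apply hwrap
    · rw [List.getLast?_eq_getElem?]
      have : l.length - 1 = i := by omega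
      rw [this, List.getElem?_eq_getElem hi]
      rfl
    · rw [List.head?_eq_head ne]; rfl

lemma IsDiCycle.pred_mem {V : Type*} {A : V → V → Prop} {l : List V}
    (h : IsDiCycle A l) {x : V} (hx : x ∈ l) : ∃ y ∈ l, A y x := by
  obtain ⟨ne, _, hch, hwrap⟩ := h
  obtain ⟨i, hi, rfl⟩ := List.getElem_of_mem hx
  rcases Nat.eq_zero_or_pos i with h0 | h0
  · subst h0
    refine ⟨l.getLast ne, List.getLast_mem ne, ?_⟩
    apply hwrap
    · rw [List.getLast?_eq_getLast ne]; rfl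
    · rw [List.head?_eq_getElem?, List.getElem?_eq_getElem hi]; rfl
  · refine ⟨l[i-1]'(by omega), List.getElem_mem (by omega), ?_⟩
    have := List.isChain_iff_getElem.mp hch (i-1) (by omega)
    simpa [Nat.sub_add_cancel h0] using this

lemma IsDiCycle.rotate_one {V : Type*} {A : V → V → Prop} {c : List V}
    (h : IsDiCycle A c) : IsDiCycle A (c.rotate 1) := by
  obtain ⟨ne, nd, hch, hwrap⟩ := h
  cases c with
  | nil => exact absurd rfl ne
  | cons x xs =>
    have hrot : (x :: xs).rotate 1 = xs ++ [x] := by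
      simpa using List.rotate_cons_succ xs x 0
    rw [hrot]
    refine ⟨by simp, ((List.perm_append_singleton x xs).nodup_iff).mpr nd, ?_, ?_⟩
    · rw [List.Chain', List.isChain_append]
      refine ⟨hch.tail, List.isChain_singleton x, ?_⟩
      intro a ha b hb
      simp at hb; subst hb
      cases xs with
      | nil => simp at ha
      | cons y ys =>
        apply hwrap
        · rw [List.getLast?_cons_cons]; exact ha
        · rfl
    · intro a ha b hb
      rw [List.getLast?_concat] at ha
      simp at ha; subst ha
      cases xs with
      | nil =>
        simp at hb; subst hb
        apply hwrap <;> rfl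
      | cons y ys =>
        simp at hb
        have := (List.isChain_cons.mp hch).1
        apply this
        rw [List.head?_cons, ← hb]
        rfl

lemma IsDiCycle.rotate {V : Type*} {A : V → V → Prop} {c : List V}
    (h : IsDiCycle A c) (n : ℕ) : IsDiCycle A (c.rotate n) := by
  induction n with
  | zero => simpa using h
  | succ k ih =>
    have := ih.rotate_one
    rwa [List.rotate_rotate] at this


/-- Vertices of the network `G_NC` obtained from a digraph `G` by vertex splitting:
`orig v` is the undashed copy `v`, `dash v` is the dashed copy `v'`, and `D w`,
`D' w` are the sink nodes `D_w`, `D_{w'}` (used for `w ∈ V_τ`). -/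
inductive NCVert (V : Type*) where
  | orig : V → NCVert V
  | dash : V → NCVert V
  | D : V → NCVert V
  | D' : V → NCVert V

/-- Adjacency of `G_NC`: an edge `(v, v')` for each vertex `v` of `G`; an edge
`(u', w)` for each edge `(u, w)` of `G` with `w ∉ V_τ`; an edge `(D_w, D_{w'})` for
each `w ∈ V_τ`; and an edge `(u', D_w)` for each edge `(u, w)` of `G` with `w ∈ V_τ`. -/
def NCAdj {V : Type*} (A : V → V → Prop) (Vτ : Set V) : NCVert V → NCVert V → Prop
  | .orig u, .dash v => u = v
  | .dash u, .orig w => A u w ∧ w ∉ Vτ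
  | .dash u, .D w => A u w ∧ w ∈ Vτ
  | .D u, .D' w => u = w ∧ w ∈ Vτ
  | _, _ => False

def NCVert.po {V : Type*} : NCVert V → Option V
  | .orig v => some v
  | _ => none

lemma NC_parse {V : Type*} (A : V → V → Prop) (Vτ : Set V) :
    ∀ (c : List (NCVert V)), c.Chain' (NCAdj A Vτ) →
      (∀ x ∈ c, ∀ w, x ≠ .D w ∧ x ≠ .D' w) → ∀ u, c.head? = some (.orig u) →
      (c.filterMap NCVert.po).head? = some u ∧
      (c.filterMap NCVert.po).Chain' (fun a b => A a b ∧ b ∉ Vτ) ∧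
      ∃ v, (c.filterMap NCVert.po).getLast? = some v ∧
        (c.getLast? = some (.orig v) ∨ c.getLast? = some (.dash v))
  | [], _, _, u, hu => by simp at hu
  | [x], _, _, u, hu => by
      simp at hu; subst hu
      refine ⟨rfl, by simp [NCVert.po, List.Chain'], u, by simp [NCVert.po], Or.inl rfl⟩
  | x :: y :: rest, hch, hOD, u, hu => by
      simp at hu; subst hu
      have hxy : NCAdj A Vτ (.orig u) y := (List.isChain_cons_cons.mp hch).1
      have hch2 : (y :: rest).Chain' (NCAdj A Vτ) := (List.isChain_cons_cons.mp hch).2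
      cases y with
      | dash v =>
        have hv : u = v := hxy
        subst hv
        cases rest with
        | nil =>
          refine ⟨by simp [NCVert.po], by simp [NCVert.po, List.Chain', List.filterMap_cons], u, by simp [NCVert.po, List.filterMap_cons], Or.inr rfl⟩
        | cons z rest' =>
          have hyz : NCAdj A Vτ (.dash u) z := (List.isChain_cons_cons.mp hch2).1
          have hch3 : (z :: rest').Chain' (NCAdj A Vτ) := (List.isChain_cons_cons.mp hch2).2
          cases z with
          | orig w =>
            obtain ⟨hAuw, hwτ⟩ := hyz
            have hOD' : ∀ x ∈ (NCVert.orig w :: rest'), ∀ w', x ≠ .D w' ∧ x ≠ .D' w' := by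
              intro x hx; exact hOD x (by simp [hx])
            obtain ⟨hd, hc, v, hlast, hor⟩ :=
              NC_parse A Vτ (.orig w :: rest') hch3 hOD' w rfl
            have hfm : (NCVert.orig u :: NCVert.dash u :: NCVert.orig w :: rest').filterMap
                NCVert.po = u :: (NCVert.orig w :: rest').filterMap NCVert.po := by
              simp [List.filterMap_cons, NCVert.po]
            rw [hfm]
            obtain ⟨d', hd'⟩ : ∃ d', (NCVert.orig w :: rest').filterMap NCVert.po = w :: d' := by
              cases hh : (NCVert.orig w :: rest').filterMap NCVert.po with
              | nil => rw [hh] at hd; simp at hd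
              | cons a t => rw [hh] at hd; simp at hd; subst hd; exact ⟨t, rfl⟩
            rw [hd'] at hc hlast ⊢
            refine ⟨rfl, List.isChain_cons_cons.mpr ⟨⟨hAuw, hwτ⟩, hc⟩, v, ?_, ?_⟩
            · rw [List.getLast?_cons_cons]; exact hlast
            · rw [List.getLast?_cons_cons, List.getLast?_cons_cons]; exact hor
          | dash w => exact absurd hyz (by simp [NCAdj])
          | D w => exact absurd rfl ((hOD (.D w) (by simp) w).1)
          | D' w => exact absurd hyz (by simp [NCAdj])
      | orig v => exact absurd hxy (by simp [NCAdj])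
      | D v => exact absurd hxy (by simp [NCAdj])
      | D' v => exact absurd hxy (by simp [NCAdj])

/-- If every directed cycle of `G` meets `V_τ`, then the network `G_NC` is acyclic. -/
theorem GNC_acyclic {V : Type*} (A : V → V → Prop) (Vτ : Set V)
    (hfvs : ∀ c : List V, IsDiCycle A c → ∃ x ∈ c, x ∈ Vτ) :
    ¬ ∃ c : List (NCVert V), IsDiCycle (NCAdj A Vτ) c := by
  rintro ⟨c, hc⟩
  -- no D' vertices in c
  have hD' : ∀ w, NCVert.D' w ∉ c := by
    intro w hw
    obtain ⟨y, _, hA⟩ := hc.succ_mem hw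
    cases y <;> exact hA
  have hD : ∀ w, NCVert.D w ∉ c := by
    intro w hw
    obtain ⟨y, hy, hA⟩ := hc.succ_mem hw
    cases y with
    | D' w' => exact hD' w' hy
    | orig _ => exact hA
    | dash _ => exact hA
    | D _ => exact hA
  -- there must be an orig vertex in c
  obtain ⟨x, hx⟩ := List.exists_mem_of_ne_nil c hc.1
  have horig : ∃ u, NCVert.orig u ∈ c := by
    cases x with
    | orig u => exact ⟨u, hx⟩
    | dash u =>
      obtain ⟨y, hy, hA⟩ := hc.succ_mem hx
      cases y with
      | orig w => exact ⟨w, hy⟩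
      | dash _ => exact absurd hA (by simp [NCAdj])
      | D w => exact absurd hy (hD w)
      | D' _ => exact absurd hA (by simp [NCAdj])
    | D w => exact absurd hx (hD w)
    | D' w => exact absurd hx (hD' w)
  obtain ⟨u, hu⟩ := horig
  obtain ⟨i, hi, hgi⟩ := List.getElem_of_mem hu
  set c' := c.rotate i with hc'def
  have hc' : IsDiCycle (NCAdj A Vτ) c' := hc.rotate i
  have hne' : c' ≠ [] := hc'.1
  have hlen : c'.length = c.length := List.length_rotate c i
  have hhead : c'.head? = some (NCVert.orig u) := by
    rw [List.head?_eq_getElem?]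
    have h0 : 0 < c'.length := by rw [hlen]; omega
    rw [List.getElem?_eq_getElem h0]
    have := List.get_rotate c i ⟨0, h0⟩
    simp only [List.get_eq_getElem] at this
    rw [this]
    simp [Nat.mod_eq_of_lt hi, hgi]
  have hOD : ∀ x ∈ c', ∀ w, x ≠ .D w ∧ x ≠ .D' w := by
    intro x hx w
    rw [hc'def, List.mem_rotate] at hx
    constructor <;> rintro rfl
    · exact hD w hx
    · exact hD' w hx
  obtain ⟨hd, hcc, v, hlast, hor⟩ := NC_parse A Vτ c' hc'.2.2.1 hOD u hhead
  set d := c'.filterMap NCVert.po with hddef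
  -- wrap edge in c' : from last to head
  have hwrap : ∀ z ∈ c'.getLast?, NCAdj A Vτ z (NCVert.orig u) := by
    intro z hz
    apply hc'.2.2.2 z hz
    rw [hhead]; rfl
  have hBvu : A v u ∧ u ∉ Vτ := by
    rcases hor with h | h
    · exact absurd (hwrap _ (by rw [h]; rfl)) (by simp [NCAdj])
    · exact hwrap _ (by rw [h]; rfl)
  -- d is a dicycle for B
  have hdnd : d.Nodup := by
    refine List.Nodup.filterMap ?_ hc'.2.1
    rintro a a' b hb hb'
    cases a <;> simp [NCVert.po] at hb
    cases a' <;> simp [NCVert.po] at hb'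
    subst hb; subst hb'; rfl
  have hdne : d ≠ [] := by intro h; rw [h] at hd; simp at hd
  have hdcyc : IsDiCycle A d := by
    refine ⟨hdne, hdnd, hcc.imp (fun _ _ h => h.1), ?_⟩
    intro a ha b hb
    rw [hlast] at ha; rw [hd] at hb
    simp at ha hb; subst ha; subst hb
    exact hBvu.1
  obtain ⟨w, hwd, hwτ⟩ := hfvs d hdcyc
  -- but every vertex of d is not in Vτ
  have : w ∉ Vτ := by
    obtain ⟨j, hj, rfl⟩ := List.getElem_of_mem hwd
    rcases Nat.eq_zero_or_pos j with h0 | h0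
    · subst h0
      have : d[0] = u := by
        have := List.head?_eq_getElem? (l := d)
        rw [hd, List.getElem?_eq_getElem hj] at this
        simpa using this.symm
      rw [this]; exact hBvu.2
    · have := List.isChain_iff_getElem.mp hcc (j-1) (by omega)
      simpa [Nat.sub_add_cancel h0] using this.2
  exact this hwτ
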